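/- arXiv:1509.08628 — 5 statements merged into one kernel-verified Lean document; each statement's English description precedes it below -/
import Mathlib

section
/- Let S = {(w_1,v_1),...,(w_n,v_n)} with positive integer weights and values, let l = \sum_i v_i, and let k, b be positive integers with k \le l. Consider a weighted plurality election with candidates {A, B, h}: one unbribable voter of weight l + k - 1 voting for h, one unbribable voter of weight l voting for B, and for each i a voter of weight v_i voting for A whose bribery cost is w_i. A briber with budget b may change any subset T of the bribable voters to vote for B at total cost \sum_{i \in T} w_i. Then the briber can ensure that h is not a (co-)winner if and only if there exists T \subseteq {1,...,n} with \sum_{i \in T} w_i \le b and \sum_{i \in T} v_i \ge k. -/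
/-- Knapsack reduction for weighted destructive bribery under One-Step-Plurality.
Candidates are `A = 0`, `B = 1`, `h = 2` (elements of `Fin 3`).  Initially
`score A = l`, `score B = l`, `score h = l + k - 1` with `l = ∑ v i`.  Bribing a set `T`
of the object-voters (at cost `∑_{i ∈ T} w i`) moves their weight `∑_{i ∈ T} v i` from
`A` to `B`.  Candidate `h` is not a (co-)winner iff some candidate has strictly greater
score.  The briber succeeds within budget `b` iff the Knapsack instance has a solution. -/
theorem knapsack_plurality_reduction (n : ℕ) (w v : Fin n → ℕ)
    (hw : ∀ i, 0 < w i) (hv : ∀ i, 0 < v i)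
    (k b l : ℕ) (hk : 0 < k) (hb : 0 < b) (hl : l = ∑ i, v i) (hkl : k ≤ l) :
    (∃ T : Finset (Fin n), ∑ i ∈ T, w i ≤ b ∧
        ∃ c : Fin 3,
          (fun c' : Fin 3 => if c' = 0 then l - ∑ i ∈ T, v i
            else if c' = 1 then l + ∑ i ∈ T, v i else l + k - 1) c >
          (fun c' : Fin 3 => if c' = 0 then l - ∑ i ∈ T, v i
            else if c' = 1 then l + ∑ i ∈ T, v i else l + k - 1) 2) ↔
      (∃ T : Finset (Fin n), ∑ i ∈ T, w i ≤ b ∧ k ≤ ∑ i ∈ T, v i) := by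
  constructor
  · rintro ⟨T, hT, c, hc⟩
    refine ⟨T, hT, ?_⟩
    fin_cases c <;> simp at hc <;> omega
  · rintro ⟨T, hT, hkT⟩
    exact ⟨T, hT, 1, by simp; omega⟩
end

section
/- Let S = {(w_1,v_1),...,(w_n,v_n)}, l = \sum_i v_i, and k \le l, b positive integers. Consider a weighted veto election over candidates {c_1, c_2, c^*, h} with: two unbribable voters of weight 2l vetoing c_1 and c_2 respectively, one unbribable voter of weight l vetoing c^*, one unbribable voter of weight 2l - 2k + 1 vetoing h, and for each i a bribable voter of weight v_i vetoing c^* at bribery cost w_i, who can be bribed to veto h instead. A candidate's score is 4l + \sum of all weights minus the total weight of vetoes against it, equivalently each candidate loses the weight vetoing it; h loses iff some candidate has fewer total veto weight than h. Then the briber can make h lose within budget b if and only if there exists T with \sum_{i\in T} w_i \le b and \sum_{i\in T} v_i \ge k. -/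
/-- Knapsack reduction for weighted destructive bribery under One-Step-Veto.
Candidates are `c₁ = 0`, `c₂ = 1`, `c* = 2`, `h = 3` (elements of `Fin 4`).  Initial total
veto weights: `c₁ : 2l`, `c₂ : 2l`, `c* : 2l` and `h : 2l - 2k + 1`, with `l = ∑ v i`.
Bribing a set `T` of object-voters (cost `∑_{i ∈ T} w i`) moves veto weight `∑_{i ∈ T} v i`
from `c*` to `h`.  Candidate `h` loses iff some candidate has strictly smaller total veto
weight.  The briber can make `h` lose within budget `b` iff the Knapsack instance has a
solution. -/
theorem knapsack_veto_reduction (n : ℕ) (w v : Fin n → ℕ)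
    (hw : ∀ i, 0 < w i) (hv : ∀ i, 0 < v i)
    (k b l : ℕ) (hk : 0 < k) (hb : 0 < b) (hl : l = ∑ i, v i) (hkl : k ≤ l) :
    (∃ T : Finset (Fin n), ∑ i ∈ T, w i ≤ b ∧
        ∃ c : Fin 4,
          (fun c' : Fin 4 => if c' = 0 then 2 * l else if c' = 1 then 2 * l
            else if c' = 2 then 2 * l - ∑ i ∈ T, v i
            else 2 * l - 2 * k + 1 + ∑ i ∈ T, v i) c <
          (fun c' : Fin 4 => if c' = 0 then 2 * l else if c' = 1 then 2 * l
            else if c' = 2 then 2 * l - ∑ i ∈ T, v i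
            else 2 * l - 2 * k + 1 + ∑ i ∈ T, v i) 3) ↔
      (∃ T : Finset (Fin n), ∑ i ∈ T, w i ≤ b ∧ k ≤ ∑ i ∈ T, v i) := by
  constructor
  · rintro ⟨T, hTw, c, hc⟩
    refine ⟨T, hTw, ?_⟩
    have hS : ∑ i ∈ T, v i ≤ l := by
      rw [hl]; exact Finset.sum_le_sum_of_subset (Finset.subset_univ T)
    fin_cases c <;> simp at hc <;> omega
  · rintro ⟨T, hTw, hTk⟩
    have hS : ∑ i ∈ T, v i ≤ l := by
      rw [hl]; exact Finset.sum_le_sum_of_subset (Finset.subset_univ T)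
    refine ⟨T, hTw, 2, ?_⟩
    simp
    omega
end

section
/- Let \sigma be a satisfying assignment of an NAE-3SAT instance with m clauses, and consider the base reduction profile: for each clause, 6 voters corresponding to the 6 NAE-satisfying assignments of that clause's three variables, and m - 1 voters voting for h. Then for each clause there exists at least one of its 6 associated voters whose vote agrees with \sigma on the clause's three variables; consequently, bribing one such voter per clause to vote for the candidate corresponding to \sigma yields a candidate with m points, strictly exceeding h's m - 1 points. -/
/-- Forward direction of the base reduction.  Let `σ` be an NAE-satisfying assignment of an
instance with `mc` clauses, and consider the base-reduction profile: for each clause `i`,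
six voters `(i, s)` whose votes restricted to clause `i`'s three variables are pairwise
distinct NAE-satisfying assignments; `mc - 1` voters vote for `h ≠ σ`.  Then for each clause
there is at least one of its six voters agreeing with `σ` on that clause's three variables;
consequently the briber can change votes (each clause-voter's new vote agreeing with the
original on the clause's variables) so that candidate `σ` gets at least `mc` points, strictly
exceeding the `mc - 1` points of `h`. -/
theorem base_reduction_forward (nv mc : ℕ) (hmc : 1 ≤ mc)
    (vars : Fin mc → Fin 3 → Fin nv) (hvars : ∀ i, Function.Injective (vars i))
    (h σ : Fin nv → Bool) (hσh : σ ≠ h)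
    (vote : Fin mc → Fin 6 → (Fin nv → Bool))
    (hdist : ∀ i : Fin mc, ∀ s s' : Fin 6,
        (∀ t : Fin 3, vote i s (vars i t) = vote i s' (vars i t)) → s = s')
    (hnae : ∀ i s, (∃ t : Fin 3, vote i s (vars i t) = true) ∧
        (∃ t : Fin 3, vote i s (vars i t) = false))
    (hσ : ∀ i : Fin mc,
        (∃ t : Fin 3, σ (vars i t) = true) ∧ (∃ t : Fin 3, σ (vars i t) = false)) :
    (∀ i : Fin mc, ∃ s : Fin 6, ∀ t : Fin 3, vote i s (vars i t) = σ (vars i t)) ∧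
    (∃ vote' : Fin mc → Fin 6 → (Fin nv → Bool),
        (∀ i s (t : Fin 3), vote' i s (vars i t) = vote i s (vars i t)) ∧
        mc ≤ Nat.card {p : Fin mc × Fin 6 // vote' p.1 p.2 = σ} ∧
        mc - 1 < Nat.card {p : Fin mc × Fin 6 // vote' p.1 p.2 = σ}) := by
  have key : ∀ i : Fin mc, ∃ s : Fin 6, ∀ t : Fin 3, vote i s (vars i t) = σ (vars i t) := by
    intro i
    let NAE := {f : Fin 3 → Bool // (∃ t, f t = true) ∧ (∃ t, f t = false)}
    let F : Fin 6 → NAE := fun s => ⟨fun t => vote i s (vars i t), hnae i s⟩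
    have hinj : Function.Injective F := fun s s' hss =>
      hdist i s s' (fun t => congrFun (congrArg Subtype.val hss) t)
    have hcard : Fintype.card NAE = 6 := by decide
    have hbij : Function.Bijective F :=
      (Fintype.bijective_iff_injective_and_card F).mpr ⟨hinj, by simp [hcard]⟩
    obtain ⟨s, hs⟩ := hbij.surjective ⟨fun t => σ (vars i t), hσ i⟩
    exact ⟨s, fun t => congrFun (congrArg Subtype.val hs) t⟩
  refine ⟨key, ?_⟩
  choose g hg using key
  refine ⟨fun i s => if s = g i then σ else vote i s, ?_, ?_, ?_⟩
  · intro i s t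
    by_cases hs : s = g i
    · simp only [hs, if_pos rfl]
      exact (hg i t).symm
    · simp [hs]
  · have hinj : Function.Injective
        (fun i : Fin mc => (⟨(i, g i), by simp⟩ :
          {p : Fin mc × Fin 6 // (if p.2 = g p.1 then σ else vote p.1 p.2) = σ})) := by
      intro a b hab
      have := congrArg (fun x => x.1.1) hab
      simpa using this
    have := Nat.card_le_card_of_injective _ hinj
    simpa using this
  · have hinj : Function.Injective
        (fun i : Fin mc => (⟨(i, g i), by simp⟩ :
          {p : Fin mc × Fin 6 // (if p.2 = g p.1 then σ else vote p.1 p.2) = σ})) := by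
      intro a b hab
      have := congrArg (fun x => x.1.1) hab
      simpa using this
    have h1 : mc ≤ Nat.card {p : Fin mc × Fin 6 //
        (fun i s => if s = g i then σ else vote i s) p.1 p.2 = σ} := by
      simpa using Nat.card_le_card_of_injective _ hinj
    omega
end

section
/- Conversely, in the base reduction profile, if after changing the votes of some clause-voters (each clause-voter's new vote must agree with their original vote on their clause's three variables, and the m-1 h-voters are unchanged) some candidate c \ne h obtains at least m points, then the assignment corresponding to c NAE-satisfies every clause, i.e., the NAE-3SAT instance is satisfiable. -/
/-- Backward direction of the base reduction.  In the base-reduction profile (six voters per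
clause whose restrictions to the clause's three variables are pairwise distinct NAE-satisfying
assignments, plus `mc - 1` unchanged voters for `h`), suppose the clause-voters' votes are
changed to `vote'`, where each new vote agrees with the original on the clause's three
variables.  If some candidate `c ≠ h` obtains at least `mc` points, then the assignment
corresponding to `c` NAE-satisfies every clause, i.e. the NAE-3SAT instance is satisfiable. -/
theorem base_reduction_backward (nv mc : ℕ) (hmc : 1 ≤ mc)
    (vars : Fin mc → Fin 3 → Fin nv) (hvars : ∀ i, Function.Injective (vars i))
    (h : Fin nv → Bool)
    (vote : Fin mc → Fin 6 → (Fin nv → Bool))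
    (hdist : ∀ i : Fin mc, ∀ s s' : Fin 6,
        (∀ t : Fin 3, vote i s (vars i t) = vote i s' (vars i t)) → s = s')
    (hnae : ∀ i s, (∃ t : Fin 3, vote i s (vars i t) = true) ∧
        (∃ t : Fin 3, vote i s (vars i t) = false))
    (vote' : Fin mc → Fin 6 → (Fin nv → Bool))
    (hagree : ∀ i s (t : Fin 3), vote' i s (vars i t) = vote i s (vars i t))
    (c : Fin nv → Bool) (hch : c ≠ h)
    (hscore : mc ≤ Nat.card {p : Fin mc × Fin 6 // vote' p.1 p.2 = c}) :
    ∀ i : Fin mc,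
      (∃ t : Fin 3, c (vars i t) = true) ∧ (∃ t : Fin 3, c (vars i t) = false) := by
  set S := {p : Fin mc × Fin 6 // vote' p.1 p.2 = c}
  let f : S → Fin mc := fun p => p.1.1
  have hinj : Function.Injective f := by
    rintro ⟨⟨i, s⟩, hp⟩ ⟨⟨i', s'⟩, hq⟩ hfe
    simp only [f] at hfe
    subst hfe
    have : s = s' := by
      apply hdist i
      intro t
      rw [← hagree i s t, ← hagree i s' t, hp, hq]
    subst this
    rfl
  have hle : Nat.card S ≤ mc := by
    have := Nat.card_le_card_of_injective f hinj
    simpa using this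
  have hcard : Nat.card S = Nat.card (Fin mc) := by
    have : Nat.card S = mc := le_antisymm hle hscore
    simpa using this
  have hsurj : Function.Surjective f :=
    ((Nat.bijective_iff_injective_and_card f).2 ⟨hinj, hcard⟩).2
  intro i
  obtain ⟨⟨⟨i', s⟩, hp⟩, hfi⟩ := hsurj i
  simp only [f] at hfi
  subst hfi
  have hc : ∀ t : Fin 3, c (vars i' t) = vote i' s (vars i' t) := by
    intro t
    rw [← hagree i' s t, hp]
  obtain ⟨⟨t1, ht1⟩, ⟨t2, ht2⟩⟩ := hnae i' s
  exact ⟨⟨t1, by rw [hc, ht1]⟩, ⟨t2, by rw [hc, ht2]⟩⟩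
end

section
/- Under One-Step-k-Approval with k = 2^j over an O-legal profile with common issue order X_1 > ... > X_m, candidate c is among a voter's top k candidates if and only if c agrees with the voter's top candidate on the first m - j issues. Consequently, the score of every candidate in the election depends only on the restriction of the profile to the first m - j issues, and any bribery that modifies only preferences on the last j issues leaves all candidates' approval scores unchanged. -/
theorem aux_card_iff (m j : ℕ) (hj : j ≤ m)
    (P : Fin m → (Fin m → Bool) → Bool)
    (hP : ∀ (i : Fin m) (a b : Fin m → Bool),
        (∀ kk : Fin m, kk < i → a kk = b kk) → P i a = P i b)
    (top : Fin m → Bool) (htop : ∀ i, top i = P i top) (c : Fin m → Bool) :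
    Nat.card {c' : Fin m → Bool //
        ∃ i : Fin m, (∀ kk : Fin m, kk < i → c' kk = c kk) ∧ c' i ≠ c i ∧ c' i = P i c'}
      < 2 ^ j ↔
    ∀ i : Fin m, (i : ℕ) < m - j → c i = top i := by
  classical
  have hsub : ∀ s : Fin j, m - j + (s : ℕ) < m := by
    intro s; have := s.isLt; omega
  constructor
  · intro hcard
    by_contra hc
    push_neg at hc
    obtain ⟨i1, hi1lt, hi1ne⟩ := hc
    have hex : ∃ n, ∃ hn : n < m, n < m - j ∧ c ⟨n, hn⟩ ≠ top ⟨n, hn⟩ :=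
      ⟨i1.val, i1.isLt, hi1lt, by simpa using hi1ne⟩
    obtain ⟨i0, ⟨hi0m, hi0lt, hi0ne⟩, hmin⟩ :
        ∃ n, (∃ hn : n < m, n < m - j ∧ c ⟨n, hn⟩ ≠ top ⟨n, hn⟩) ∧
          ∀ k, k < n → ¬(∃ hk : k < m, k < m - j ∧ c ⟨k, hk⟩ ≠ top ⟨k, hk⟩) :=
      ⟨Nat.find hex, Nat.find_spec hex, fun k hk => Nat.find_min hex hk⟩
    have hprefix : ∀ kk : Fin m, (kk : ℕ) < i0 → c kk = top kk := by
      intro kk hkk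
      by_contra hne
      exact absurd ⟨kk.isLt, lt_trans hkk hi0lt, by simpa using hne⟩ (hmin kk.val hkk)
    set I : Fin m := ⟨i0, hi0m⟩ with hIdef
    set ext : (Fin j → Bool) → (Fin m → Bool) := fun t kk =>
      if (kk : ℕ) < m - j then (if (kk : ℕ) = i0 then !(c kk) else c kk)
      else if hk2 : (kk : ℕ) - (m - j) < j then t ⟨(kk : ℕ) - (m - j), hk2⟩ else true
      with hextdef
    have hext_lt : ∀ t (kk : Fin m), (kk : ℕ) < i0 → ext t kk = c kk := by
      intro t kk hkk
      rw [hextdef]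
      simp only
      rw [if_pos (lt_trans hkk hi0lt), if_neg (Nat.ne_of_lt hkk)]
    have hext_I : ∀ t, ext t I = !(c I) := by
      intro t
      rw [hextdef]
      simp only
      rw [if_pos (show (I : ℕ) < m - j from hi0lt)]
      simp
      rfl
    have htopI : top I = !(c I) := by
      have hne : top I ≠ c I := Ne.symm hi0ne
      revert hne
      cases (c I) <;> cases (top I) <;> decide
    have hmem : ∀ t, ∃ i : Fin m,
        (∀ kk : Fin m, kk < i → ext t kk = c kk) ∧ ext t i ≠ c i ∧ ext t i = P i (ext t) := by
      intro t
      refine ⟨I, fun kk hkk => hext_lt t kk hkk, ?_, ?_⟩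
      · rw [hext_I]; exact Bool.not_ne_self (c I)
      · rw [hext_I]
        have h1 : P I (ext t) = P I c := hP I _ _ (fun kk hkk => hext_lt t kk hkk)
        have h2 : P I c = P I top := hP I _ _ (fun kk hkk => hprefix kk hkk)
        rw [h1, h2, ← htop I, htopI]
    clear_value ext
    have hextinj : Function.Injective ext := by
      intro t1 t2 ht
      funext s
      have hsj : (s : ℕ) < j := s.isLt
      have h := congrFun ht ⟨m - j + (s : ℕ), hsub s⟩
      rw [hextdef] at h
      simp only [Fin.val_mk] at h
      rw [if_neg (Nat.not_lt.mpr (Nat.le_add_right (m - j) (s : ℕ))),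
        dif_pos (show m - j + (s : ℕ) - (m - j) < j by
          rw [Nat.add_sub_cancel_left]; exact hsj)] at h
      simpa [Nat.add_sub_cancel_left] using h
    have hF : Function.Injective (fun t : Fin j → Bool =>
        (⟨ext t, hmem t⟩ : {c' : Fin m → Bool //
          ∃ i : Fin m, (∀ kk : Fin m, kk < i → c' kk = c kk) ∧ c' i ≠ c i ∧ c' i = P i c'})) := by
      intro t1 t2 h
      exact hextinj (congrArg Subtype.val h)
    have hle := Nat.card_le_card_of_injective _ hF
    have hc2 : Nat.card (Fin j → Bool) = 2 ^ j := by simp [Nat.card_eq_fintype_card]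
    rw [hc2] at hle
    exact absurd hcard (not_lt.mpr hle)
  · intro h
    have hPc : ∀ i : Fin m, (i : ℕ) < m - j → P i c = c i := by
      intro i hi
      have h2 : P i c = P i top := hP i c top (fun kk hkk => h kk (lt_trans hkk hi))
      rw [h2, ← htop, h i hi]
    have hA : ∀ (c' : Fin m → Bool),
        (∃ i : Fin m, (∀ kk : Fin m, kk < i → c' kk = c kk) ∧ c' i ≠ c i ∧ c' i = P i c') →
        ∀ kk : Fin m, (kk : ℕ) < m - j → c' kk = c kk := by
      rintro c' ⟨i, hpre, hne, heq⟩ kk hkk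
      have him : ¬ (i : ℕ) < m - j := by
        intro hilt
        exact hne (by rw [heq, hP i c' c hpre, hPc i hilt])
      exact hpre kk (show (kk : ℕ) < (i : ℕ) by omega)
    set g0 : Fin j → Bool := fun s => c ⟨m - j + (s : ℕ), hsub s⟩ with hg0
    clear_value g0
    have hne0 : ∀ (c' : Fin m → Bool)
        (hc' : ∃ i : Fin m, (∀ kk : Fin m, kk < i → c' kk = c kk) ∧ c' i ≠ c i ∧ c' i = P i c'),
        (fun s : Fin j => c' ⟨m - j + (s : ℕ), hsub s⟩) ≠ g0 := by
      intro c' hc' heq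
      obtain ⟨i, hpre, hnei, heqi⟩ := hc'
      have hcc : c' = c := by
        funext kk
        by_cases hk : (kk : ℕ) < m - j
        · exact hA c' ⟨i, hpre, hnei, heqi⟩ kk hk
        · have hs : (kk : ℕ) - (m - j) < j := by have := kk.isLt; omega
          have h2 := congrFun heq ⟨(kk : ℕ) - (m - j), hs⟩
          rw [hg0] at h2
          simp only [Fin.val_mk] at h2
          have hkval : m - j + ((kk : ℕ) - (m - j)) = (kk : ℕ) := by omega
          rwa [show (⟨m - j + ((kk : ℕ) - (m - j)),
              hsub ⟨(kk : ℕ) - (m - j), hs⟩⟩ : Fin m) = kk from Fin.ext hkval] at h2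
      exact hnei (congrFun hcc i)
    have hGinj : Function.Injective (fun x : {c' : Fin m → Bool //
        ∃ i : Fin m, (∀ kk : Fin m, kk < i → c' kk = c kk) ∧ c' i ≠ c i ∧ c' i = P i c'} =>
        (⟨fun s => x.1 ⟨m - j + (s : ℕ), hsub s⟩, hne0 x.1 x.2⟩ :
          {g : Fin j → Bool // g ≠ g0})) := by
      intro x y hxy
      have htail := congrArg Subtype.val hxy
      apply Subtype.ext
      funext kk
      by_cases hk : (kk : ℕ) < m - j
      · rw [hA x.1 x.2 kk hk, hA y.1 y.2 kk hk]
      · have hs : (kk : ℕ) - (m - j) < j := by have := kk.isLt; omega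
        have h2 := congrFun htail ⟨(kk : ℕ) - (m - j), hs⟩
        simp only [Fin.val_mk] at h2
        have hkval : m - j + ((kk : ℕ) - (m - j)) = (kk : ℕ) := by omega
        rwa [show (⟨m - j + ((kk : ℕ) - (m - j)),
            hsub ⟨(kk : ℕ) - (m - j), hs⟩⟩ : Fin m) = kk from Fin.ext hkval] at h2
    have hle := Nat.card_le_card_of_injective _ hGinj
    have hc2 : Nat.card {g : Fin j → Bool // g ≠ g0} < 2 ^ j := by
      rw [Nat.card_eq_fintype_card]
      have h1 : Fintype.card {g : Fin j → Bool // g ≠ g0} < Fintype.card (Fin j → Bool) :=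
        Fintype.card_subtype_lt (x := g0) (by simp)
      simpa using h1
    exact lt_of_le_of_lt hle hc2

/-- One-Step-`k`-Approval with `k = 2 ^ j` over an `O`-legal profile with common issue order
`X_1 > ... > X_m`.  Voter `vo`'s preferences are given by `P vo i a` (preferred value of
issue `i`, depending only on earlier issues), with lexicographic top candidate `topP vo`;
the voter approves exactly the top `2 ^ j` candidates, i.e. those with fewer than `2 ^ j`
candidates preferred to them.  Then:
* a candidate `c` is among voter `vo`'s top `2 ^ j` candidates iff `c` agrees with `topP vo`
  on the first `m - j` issues;
* if a second profile `Q` differs from `P` only on the last `j` issues (i.e. agrees on all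
  issues `i` with `i < m - j`), then every candidate's approval score is unchanged. -/
theorem kapproval_pow_two_score_invariance (m j nV : ℕ) (hj : j ≤ m)
    (P Q : Fin nV → Fin m → (Fin m → Bool) → Bool)
    (hP : ∀ (vo : Fin nV) (i : Fin m) (a b : Fin m → Bool),
        (∀ kk : Fin m, kk < i → a kk = b kk) → P vo i a = P vo i b)
    (hQ : ∀ (vo : Fin nV) (i : Fin m) (a b : Fin m → Bool),
        (∀ kk : Fin m, kk < i → a kk = b kk) → Q vo i a = Q vo i b)
    (topP topQ : Fin nV → Fin m → Bool)
    (htopP : ∀ vo i, topP vo i = P vo i (topP vo))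
    (htopQ : ∀ vo i, topQ vo i = Q vo i (topQ vo))
    (hagree : ∀ (vo : Fin nV) (i : Fin m), (i : ℕ) < m - j → P vo i = Q vo i) :
    (∀ (vo : Fin nV) (c : Fin m → Bool),
      Nat.card {c' : Fin m → Bool //
          ∃ i : Fin m, (∀ kk : Fin m, kk < i → c' kk = c kk) ∧ c' i ≠ c i ∧ c' i = P vo i c'}
        < 2 ^ j ↔
      ∀ i : Fin m, (i : ℕ) < m - j → c i = topP vo i) ∧
    (∀ c : Fin m → Bool,
      Nat.card {vo : Fin nV //
        Nat.card {c' : Fin m → Bool //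
          ∃ i : Fin m, (∀ kk : Fin m, kk < i → c' kk = c kk) ∧ c' i ≠ c i ∧ c' i = P vo i c'}
          < 2 ^ j} =
      Nat.card {vo : Fin nV //
        Nat.card {c' : Fin m → Bool //
          ∃ i : Fin m, (∀ kk : Fin m, kk < i → c' kk = c kk) ∧ c' i ≠ c i ∧ c' i = Q vo i c'}
          < 2 ^ j}) := by
  classical
  have hmainP := fun vo c => aux_card_iff m j hj (P vo) (hP vo) (topP vo) (htopP vo) c
  have hmainQ := fun vo c => aux_card_iff m j hj (Q vo) (hQ vo) (topQ vo) (htopQ vo) c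
  have htopagree : ∀ (vo : Fin nV) (i : Fin m), (i : ℕ) < m - j → topP vo i = topQ vo i := by
    intro vo i
    have key : ∀ n, ∀ hn : n < m, n < m - j → topP vo ⟨n, hn⟩ = topQ vo ⟨n, hn⟩ := by
      intro n
      induction n using Nat.strong_induction_on with
      | _ n ih =>
        intro hn hnj
        have h1 : P vo ⟨n, hn⟩ (topP vo) = Q vo ⟨n, hn⟩ (topP vo) := by
          rw [hagree vo ⟨n, hn⟩ hnj]
        have h2 : Q vo ⟨n, hn⟩ (topP vo) = Q vo ⟨n, hn⟩ (topQ vo) := by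
          apply hQ
          intro kk hkk
          have hkn : (kk : ℕ) < n := hkk
          have := ih kk.val hkn kk.isLt (lt_trans hkn hnj)
          simpa using this
        rw [htopP, htopQ, h1, h2]
    intro hi
    have := key i.val i.isLt hi
    simpa using this
  refine ⟨fun vo c => hmainP vo c, fun c => ?_⟩
  apply Nat.card_congr
  apply Equiv.subtypeEquivRight
  intro vo
  rw [hmainP vo c, hmainQ vo c]
  constructor
  · intro h i hi; rw [← htopagree vo i hi]; exact h i hi
  · intro h i hi; rw [htopagree vo i hi]; exact h i hi
end
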